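/- For all integers d, δ, a ≥ 1 and every integer m ≥ 0, one has m_d(σ^δ_m(a)) = σ^{δ/gcd(d,δ)}_m(a) in 𝒢. In particular, if gcd(d,δ) = 1 then m_d(σ^δ_m(a)) = σ^δ_m(a), and if d | δ then m_d(σ^δ_m(a)) = σ^{δ/d}_m(a). -/

import Mathlib

noncomputable section

/-- `G = (ℝ/ℤ)^r`. -/
abbrev Gr (r : ℕ) : Type := Fin r → AddCircle (1 : ℝ)

/-- The group algebra `𝒢 = ℚ[G]`. -/
abbrev GA (r : ℕ) : Type := AddMonoidAlgebra ℚ (Gr r)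

/-- The multiplication operator `m_d`, the ℚ-linear operator determined by
`m_d((θ)) = (d • θ)`. -/
noncomputable def mulOp (r : ℕ) (d : ℤ) : GA r →ₗ[ℚ] GA r :=
  (AddMonoidAlgebra.coeffLinearEquiv ℚ).symm.toLinearMap ∘ₗ
    Finsupp.lmapDomain ℚ ℚ (fun θ : Gr r => d • θ) ∘ₗ
    (AddMonoidAlgebra.coeffLinearEquiv ℚ).toLinearMap

/-- The division operator `d_{1/d}`, the ℚ-linear operator determined by
`d_{1/d}((θ)) = d^{-r} • ∑_{τ : d • τ = θ} (τ)`. -/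
noncomputable def divOp (r d : ℕ) : GA r →ₗ[ℚ] GA r :=
  (Finsupp.lsum ℚ fun θ : Gr r =>
    LinearMap.toSpanSingleton ℚ (GA r)
      (AddMonoidAlgebra.ofCoeff
        (((d : ℚ) ^ r)⁻¹ • ∑ᶠ τ ∈ {τ : Gr r | d • τ = θ}, Finsupp.single τ (1 : ℚ)))) ∘ₗ
    (AddMonoidAlgebra.coeffLinearEquiv ℚ).toLinearMap

/-- `T_n := d_{1/n}((0))`, the average of the `n`-torsion elements of `G`. -/
noncomputable def Tor (r n : ℕ) : GA r := divOp r n (AddMonoidAlgebra.ofCoeff (Finsupp.single 0 1))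

/-- The refined divisor-sum `σ^δ_m(a) := ∑_{k ∣ a} (a/k)^m • T_{δ/gcd(δ,k)}`. -/
noncomputable def sigmaRef (r δ m a : ℕ) : GA r :=
  ∑ k ∈ a.divisors, ((a / k : ℕ) : ℚ) ^ m • Tor r (δ / Nat.gcd δ k)

section Aux

theorem torsion_range (n : ℕ) [NeZero n] :
    {x : AddCircle (1:ℝ) | n • x = 0} = Set.range (ZMod.toAddCircle : ZMod n → UnitAddCircle) := by
  ext x
  simp only [Set.mem_setOf_eq, Set.mem_range]
  constructor
  · intro hx
    have hn : 0 < n := NeZero.pos n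
    have hfin : IsOfFinAddOrder x := isOfFinAddOrder_iff_nsmul_eq_zero.2 ⟨n, hn, hx⟩
    obtain ⟨m, hgcd, hlt, he⟩ := AddCircle.exists_gcd_eq_one_of_isOfFinAddOrder hfin
    set k := addOrderOf x with hk
    have hk0 : 0 < k := hfin.addOrderOf_pos
    have hkn : k ∣ n := addOrderOf_dvd_of_nsmul_eq_zero hx
    obtain ⟨c, hc⟩ := hkn
    refine ⟨((m * c : ℕ) : ZMod n), ?_⟩
    rw [ZMod.toAddCircle_natCast, ← he]
    congr 1
    have hc0 : 0 < c := by
      rcases Nat.eq_zero_or_pos c with h | h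
      · exfalso; rw [h, mul_zero] at hc; exact hn.ne' hc
      · exact h
    have hk0' : (k : ℝ) ≠ 0 := Nat.cast_ne_zero.2 hk0.ne'
    have hc0' : (c : ℝ) ≠ 0 := Nat.cast_ne_zero.2 hc0.ne'
    rw [hc]
    push_cast
    rw [mul_one]
    field_simp
  · rintro ⟨j, rfl⟩
    rw [← map_nsmul]
    have h2 : n • j = 0 := by
      rw [nsmul_eq_mul, ZMod.natCast_self, zero_mul]
    rw [h2, map_zero]


theorem card_cast_fiber (n' gg : ℕ) (hn' : 0 < n') (hg : 0 < gg) (z : ZMod n') :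
    haveI : NeZero n' := ⟨hn'.ne'⟩
    Nat.card {u : ZMod (n' * gg) // (ZMod.castHom (Dvd.intro gg rfl) (ZMod n')) u = z} = gg := by
  haveI : NeZero n' := ⟨hn'.ne'⟩
  haveI : NeZero (n' * gg) := ⟨(Nat.mul_pos hn' hg).ne'⟩
  set n := n' * gg with hn
  have key : ∀ u : ZMod n, (ZMod.castHom (Dvd.intro gg rfl) (ZMod n')) u = ((u.val : ℕ) : ZMod n') := by
    intro u
    conv_lhs => rw [← ZMod.natCast_zmod_val u]
    rw [map_natCast]
  let e : Fin gg → {u : ZMod n // (ZMod.castHom (Dvd.intro gg rfl) (ZMod n')) u = z} :=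
    fun t => ⟨((z.val + n' * t : ℕ) : ZMod n), by
      rw [map_natCast]
      push_cast
      rw [ZMod.natCast_self, zero_mul, add_zero, ZMod.natCast_val, ZMod.cast_id]⟩
  have hval : ∀ t : Fin gg, z.val + n' * t < n := by
    intro t
    calc z.val + n' * t < n' + n' * t := by
          exact Nat.add_lt_add_right (ZMod.val_lt z) _
      _ = n' * (t + 1) := by ring
      _ ≤ n' * gg := Nat.mul_le_mul_left _ (Nat.succ_le_of_lt t.isLt)
  have hbij : Function.Bijective e := by
    constructor
    · intro t₁ t₂ h
      have h' : ((z.val + n' * t₁ : ℕ) : ZMod n) = ((z.val + n' * t₂ : ℕ) : ZMod n) :=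
        congrArg Subtype.val h
      have := congrArg ZMod.val h'
      rw [ZMod.val_cast_of_lt (hval t₁), ZMod.val_cast_of_lt (hval t₂)] at this
      have h2 : n' * (t₁ : ℕ) = n' * (t₂ : ℕ) := by omega
      exact Fin.ext (Nat.eq_of_mul_eq_mul_left hn' h2)
    · rintro ⟨u, hu⟩
      rw [key] at hu
      have hvz : u.val % n' = z.val := by
        have h3 := congrArg ZMod.val hu
        rwa [ZMod.val_natCast] at h3
      have ht : u.val / n' < gg := Nat.div_lt_of_lt_mul (ZMod.val_lt u)
      refine ⟨⟨u.val / n', ht⟩, ?_⟩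
      apply Subtype.ext
      show ((z.val + n' * (u.val / n') : ℕ) : ZMod n) = u
      rw [← hvz, Nat.mod_add_div]
      exact ZMod.natCast_zmod_val u
  rw [← Nat.card_eq_of_bijective e hbij, Nat.card_eq_fintype_card, Fintype.card_fin]

theorem card_psi_fiber (n' gg d' : ℕ) (hn' : 0 < n') (hg : 0 < gg)
    (hco : Nat.Coprime d' n') (y : ZMod n') :
    Nat.card {u : ZMod (n' * gg) //
      d' • (ZMod.castHom (Dvd.intro gg rfl) (ZMod n')) u = y} = gg := by
  haveI : NeZero n' := ⟨hn'.ne'⟩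
  set w : (ZMod n')ˣ := ZMod.unitOfCoprime d' hco with hw
  have hiff : ∀ v : ZMod n', (d' • v = y ↔ v = (↑w⁻¹ : ZMod n') * y) := by
    intro v
    rw [nsmul_eq_mul, ← ZMod.coe_unitOfCoprime d' hco, ← hw]
    exact (Units.eq_inv_mul_iff_mul_eq w).symm
  rw [Nat.card_congr (Equiv.subtypeEquivRight (fun u => hiff _))]
  exact card_cast_fiber n' gg hn' hg _

theorem smul_toAddCircle (n' g d' : ℕ) (hn' : 0 < n') (hg : 0 < g) (u : ZMod (n' * g)) :
    haveI : NeZero n' := ⟨hn'.ne'⟩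
    haveI : NeZero (n' * g) := ⟨(Nat.mul_pos hn' hg).ne'⟩
    (d' * g) • (ZMod.toAddCircle u : UnitAddCircle) =
      ZMod.toAddCircle (d' • (ZMod.castHom (Dvd.intro g rfl) (ZMod n')) u) := by
  haveI : NeZero n' := ⟨hn'.ne'⟩
  haveI : NeZero (n' * g) := ⟨(Nat.mul_pos hn' hg).ne'⟩
  set a := u.val with ha
  have hu : u = ((a : ℕ) : ZMod (n' * g)) := (ZMod.natCast_zmod_val u).symm
  have hc : (ZMod.castHom (Dvd.intro g rfl) (ZMod n')) ((a : ℕ) : ZMod (n' * g))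
      = ((a : ℕ) : ZMod n') := map_natCast _ _
  rw [hu, hc, ← map_nsmul]
  have h3 : ∀ (m k : ℕ) [NeZero m], k • ((a : ℕ) : ZMod m) = ((k * a : ℕ) : ZMod m) := by
    intro m k _
    rw [nsmul_eq_mul, Nat.cast_mul]
  rw [h3, h3, ZMod.toAddCircle_natCast, ZMod.toAddCircle_natCast]
  congr 1
  have h1 : (n' : ℝ) ≠ 0 := Nat.cast_ne_zero.2 hn'.ne'
  have h2 : (g : ℝ) ≠ 0 := Nat.cast_ne_zero.2 hg.ne'
  push_cast
  field_simp


theorem gcd_chain (n a b : ℕ) (hn : 0 < n) :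
    (n / Nat.gcd n a) / Nat.gcd (n / Nat.gcd n a) b = n / Nat.gcd n (a * b) := by
  set g := Nat.gcd n a with hg
  have hg0 : 0 < g := Nat.gcd_pos_of_pos_left _ hn
  have hn' : n = g * (n / g) := (Nat.mul_div_cancel' (Nat.gcd_dvd_left n a)).symm
  have ha' : a = g * (a / g) := (Nat.mul_div_cancel' (Nat.gcd_dvd_right n a)).symm
  have h1 : Nat.gcd n (a * b) = g * Nat.gcd (n / g) b := by
    calc Nat.gcd n (a * b) = Nat.gcd (g * (n/g)) (g * ((a/g) * b)) := by
          rw [← hn', ← mul_assoc, ← ha']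
      _ = g * Nat.gcd (n/g) ((a/g) * b) := Nat.gcd_mul_left g _ _
      _ = g * Nat.gcd (n/g) b :=  by
          rw [Nat.Coprime.gcd_mul_left_cancel_right b (Nat.coprime_div_gcd_div_gcd hg0).symm]
  rw [h1, Nat.div_div_eq_div_mul, ← Nat.div_div_eq_div_mul n g _]

noncomputable def eN (r n : ℕ) [NeZero n] : (Fin r → ZMod n) → Gr r :=
  fun j i => ZMod.toAddCircle (j i)

theorem eN_injective (r n : ℕ) [NeZero n] : Function.Injective (eN r n) := by
  intro j₁ j₂ h
  funext i
  exact ZMod.toAddCircle_injective n (congrFun h i)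

theorem torsionGr_eq (r n : ℕ) [NeZero n] :
    {τ : Gr r | n • τ = 0} = Set.range (eN r n) := by
  ext τ
  simp only [Set.mem_setOf_eq, Set.mem_range]
  constructor
  · intro hτ
    have h1 : ∀ i, n • τ i = 0 := fun i => congrFun hτ i
    have h2 : ∀ i, ∃ y : ZMod n, ZMod.toAddCircle y = τ i := by
      intro i
      have := (torsion_range n).le (h1 i)
      exact this
    choose j hj using h2
    exact ⟨j, funext hj⟩
  · rintro ⟨j, rfl⟩
    funext i
    show n • ZMod.toAddCircle (j i) = 0
    rw [← map_nsmul, nsmul_eq_mul, ZMod.natCast_self, zero_mul, map_zero]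

theorem Tor_eq (r n : ℕ) [NeZero n] :
    Tor r n = ((n : ℚ) ^ r)⁻¹ •
      ∑ j : Fin r → ZMod n, AddMonoidAlgebra.ofCoeff (Finsupp.single (eN r n j) (1 : ℚ)) := by
  rw [Tor, divOp, LinearMap.comp_apply]
  erw [Finsupp.lsum_single]
  rw [LinearMap.toSpanSingleton_apply, one_smul]
  rw [← AddMonoidAlgebra.ofCoeff_sum, ← AddMonoidAlgebra.ofCoeff_smul]
  congr 1
  rw [torsionGr_eq, finsum_mem_range (eN_injective r n), finsum_eq_sum_of_fintype]


theorem mulOp_Tor_aux (r n' g d' : ℕ) (hn' : 0 < n') (hg : 0 < g) (hd' : 0 < d')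
    (hco : Nat.Coprime d' n') :
    mulOp r ((d' * g : ℕ) : ℤ) (Tor r (n' * g)) = Tor r n' := by
  classical
  haveI : NeZero n' := ⟨hn'.ne'⟩
  haveI : NeZero (n' * g) := ⟨(Nat.mul_pos hn' hg).ne'⟩
  set d := d' * g with hdeq
  set ψ : ZMod (n' * g) → ZMod n' :=
    fun u => d' • (ZMod.castHom (Dvd.intro g rfl) (ZMod n')) u with hψ
  set Φ : (Fin r → ZMod (n' * g)) → (Fin r → ZMod n') := fun j i => ψ (j i) with hΦ
  have hsmul : ∀ j : Fin r → ZMod (n' * g),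
      (d : ℤ) • eN r (n' * g) j = eN r n' (Φ j) := by
    intro j
    funext i
    show (d : ℤ) • eN r (n' * g) j i = eN r n' (Φ j) i
    rw [natCast_zsmul]
    show d • ZMod.toAddCircle (j i) = ZMod.toAddCircle (ψ (j i))
    rw [hdeq]
    exact smul_toAddCircle n' g d' hn' hg (j i)
  rw [Tor_eq r (n' * g), Tor_eq r n', map_smul, map_sum]
  have hsingle : ∀ j, mulOp r (d : ℤ) (AddMonoidAlgebra.ofCoeff (Finsupp.single (eN r (n' * g) j) (1:ℚ)))
      = AddMonoidAlgebra.ofCoeff (Finsupp.single (eN r n' (Φ j)) 1) := by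
    intro j
    rw [mulOp, LinearMap.comp_apply, LinearMap.comp_apply]
    erw [Finsupp.lmapDomain_apply, Finsupp.mapDomain_single]
    rw [hsmul]
    rfl
  simp only [hsingle]
  -- fiberwise sum
  have hfib : ∑ j : Fin r → ZMod (n' * g), AddMonoidAlgebra.ofCoeff (Finsupp.single (eN r n' (Φ j)) (1:ℚ))
      = ∑ σ : Fin r → ZMod n', (g ^ r) • AddMonoidAlgebra.ofCoeff (Finsupp.single (eN r n' σ) (1:ℚ)) := by
    rw [← Fintype.sum_fiberwise' Φ (fun σ => AddMonoidAlgebra.ofCoeff (Finsupp.single (eN r n' σ) (1:ℚ)))]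
    refine Finset.sum_congr rfl fun σ _ => ?_
    rw [Finset.sum_const, Finset.card_univ]
    congr 1
    -- card of fiber = g ^ r
    have e1 : {j : Fin r → ZMod (n' * g) // Φ j = σ} ≃
        ∀ i : Fin r, {u : ZMod (n' * g) // ψ u = σ i} := by
      refine (Equiv.subtypeEquivRight ?_).trans (Equiv.subtypePiEquivPi)
      intro j
      exact funext_iff
    rw [Fintype.card_congr e1, Fintype.card_pi]
    have hc : ∀ i : Fin r, Fintype.card {u : ZMod (n' * g) // ψ u = σ i} = g := by
      intro i
      rw [← Nat.card_eq_fintype_card]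
      exact card_psi_fiber n' g d' hn' hg hco (σ i)
    simp [hc]
  rw [hfib]
  rw [Finset.smul_sum, Finset.smul_sum]
  refine Finset.sum_congr rfl fun σ _ => ?_
  rw [← Nat.cast_smul_eq_nsmul ℚ (g ^ r), smul_smul]
  congr 1
  have hg0 : ((g : ℚ)) ≠ 0 := Nat.cast_ne_zero.2 hg.ne'
  have hn0 : ((n' : ℚ)) ≠ 0 := Nat.cast_ne_zero.2 hn'.ne'
  push_cast
  field_simp
  ring

theorem mulOp_Tor (r d n : ℕ) (hd : 0 < d) (hn : 0 < n) :
    mulOp r (d : ℤ) (Tor r n) = Tor r (n / Nat.gcd d n) := by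
  have hg : 0 < Nat.gcd d n := Nat.gcd_pos_of_pos_left _ hd
  have hn' : 0 < n / Nat.gcd d n :=
    Nat.div_pos (Nat.le_of_dvd hn (Nat.gcd_dvd_right d n)) hg
  have hd' : 0 < d / Nat.gcd d n :=
    Nat.div_pos (Nat.le_of_dvd hd (Nat.gcd_dvd_left d n)) hg
  have hco : Nat.Coprime (d / Nat.gcd d n) (n / Nat.gcd d n) := Nat.coprime_div_gcd_div_gcd hg
  have hneq : n = (n / Nat.gcd d n) * Nat.gcd d n :=
    (Nat.div_mul_cancel (Nat.gcd_dvd_right d n)).symm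
  have hdeq : d = (d / Nat.gcd d n) * Nat.gcd d n :=
    (Nat.div_mul_cancel (Nat.gcd_dvd_left d n)).symm
  calc mulOp r (d : ℤ) (Tor r n)
      = mulOp r (((d / Nat.gcd d n) * Nat.gcd d n : ℕ) : ℤ)
          (Tor r ((n / Nat.gcd d n) * Nat.gcd d n)) := by rw [← hneq, ← hdeq]
    _ = Tor r (n / Nat.gcd d n) :=
        mulOp_Tor_aux r _ _ _ hn' hg hd' hco

end Aux

/-- `m_d(σ^δ_m(a)) = σ^{δ/gcd(d,δ)}_m(a)`.  In particular, if `gcd(d,δ) = 1`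
then `m_d(σ^δ_m(a)) = σ^δ_m(a)`, and if `d ∣ δ` then
`m_d(σ^δ_m(a)) = σ^{δ/d}_m(a)`. -/
theorem statement3 (r : ℕ) (hr : 1 ≤ r) (d δ a m : ℕ)
    (hd : 1 ≤ d) (hδ : 1 ≤ δ) (ha : 1 ≤ a) :
    mulOp r (d : ℤ) (sigmaRef r δ m a) = sigmaRef r (δ / Nat.gcd d δ) m a ∧
    (Nat.gcd d δ = 1 → mulOp r (d : ℤ) (sigmaRef r δ m a) = sigmaRef r δ m a) ∧
    (d ∣ δ → mulOp r (d : ℤ) (sigmaRef r δ m a) = sigmaRef r (δ / d) m a) := by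
  have hgpos : 0 < Nat.gcd d δ := Nat.gcd_pos_of_pos_left _ hd
  have main : mulOp r (d : ℤ) (sigmaRef r δ m a) = sigmaRef r (δ / Nat.gcd d δ) m a := by
    rw [sigmaRef, sigmaRef, map_sum]
    refine Finset.sum_congr rfl fun k hk => ?_
    have hk1 : 0 < k := Nat.pos_of_mem_divisors hk
    have hN : 0 < δ / Nat.gcd δ k :=
      Nat.div_pos (Nat.le_of_dvd hδ (Nat.gcd_dvd_left δ k)) (Nat.gcd_pos_of_pos_left _ hδ)
    rw [map_smul, mulOp_Tor r d _ hd hN]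
    congr 2
    rw [Nat.gcd_comm d (δ / Nat.gcd δ k), gcd_chain δ k d hδ,
      Nat.gcd_comm d δ, gcd_chain δ d k hδ, mul_comm k d]
  refine ⟨main, ?_, ?_⟩
  · intro h1
    rw [main, h1, Nat.div_one]
  · intro hdvd
    rw [main, Nat.gcd_eq_left hdvd]


end
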